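/- arXiv:2305.15351 — 6 statements merged into one kernel-verified Lean document; each statement's English description precedes it below -/
import Mathlib

section
/- Let d ≥ 1 and let G be a multigraph on r vertices such that for each k ∈ [d] there is a set V_k of vertices with edges forming a clique on V_k, and suppose every pair of distinct vertices is joined by at least one edge (from some clique), and every vertex belongs to at least one V_k. If h = max over k of |V_k|, then r ≤ √d · h. -/
/-- Combinatorial core of Theorem 1: a multigraph on `r` vertices whose edges are
cliques on vertex sets `V k`, `k ∈ [d]`, such that every pair of distinct vertices
is joined by some clique and every vertex lies in some `V k`.  If `h` is the maximum
clique size, then `r ≤ √d · h`. -/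
theorem stmt_0 (d r : ℕ) (hd : 1 ≤ d) (V : Fin d → Finset (Fin r))
    (hpair : ∀ u v : Fin r, u ≠ v → ∃ k : Fin d, u ∈ V k ∧ v ∈ V k)
    (hcover : ∀ v : Fin r, ∃ k : Fin d, v ∈ V k)
    (h : ℕ) (hh : h = Finset.univ.sup fun k : Fin d => (V k).card) :
    (r : ℝ) ≤ Real.sqrt d * h := by
  classical
  have hhk : ∀ k, (V k).card ≤ h := fun k => hh ▸ Finset.le_sup (f := fun k => (V k).card) (Finset.mem_univ k)
  have hr1 : r ≤ d * h := by
    have hsub : (Finset.univ : Finset (Fin r)) ⊆ Finset.univ.biUnion (fun k => V k) := by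
      intro v _
      obtain ⟨k, hk⟩ := hcover v
      exact Finset.mem_biUnion.2 ⟨k, Finset.mem_univ k, hk⟩
    calc r = (Finset.univ : Finset (Fin r)).card := (Finset.card_fin r).symm
      _ ≤ (Finset.univ.biUnion fun k => V k).card := Finset.card_le_card hsub
      _ ≤ ∑ k, (V k).card := Finset.card_biUnion_le
      _ ≤ ∑ _k : Fin d, h := Finset.sum_le_sum fun k _ => hhk k
      _ = d * h := by simp [Finset.sum_const, Finset.card_univ, mul_comm]
  have hr2 : r * r - r ≤ d * (h * h - h) := by
    set f : Fin r × Fin r → Fin d := fun p =>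
      if hp : p.1 ≠ p.2 then (hpair p.1 p.2 hp).choose else ⟨0, hd⟩ with hf
    have hinj : (Finset.univ : Finset (Fin r)).offDiag.card ≤
        ((Finset.univ : Finset (Fin d)).sigma fun k => (V k).offDiag).card := by
      apply Finset.card_le_card_of_injOn (fun p => ⟨f p, p⟩)
      · intro p hp
        have hne : p.1 ≠ p.2 := (Finset.mem_offDiag.1 hp).2.2
        have hspec := (hpair p.1 p.2 hne).choose_spec
        simp only [hf, dif_pos hne] at *
        exact Finset.mem_sigma.2 ⟨Finset.mem_univ _,
          Finset.mem_offDiag.2 ⟨hspec.1, hspec.2, hne⟩⟩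
      · intro p _ q _ hpq
        exact eq_of_heq (Sigma.mk.inj_iff.1 hpq).2
    have hcard1 : (Finset.univ : Finset (Fin r)).offDiag.card = r * r - r := by
      rw [Finset.offDiag_card, Finset.card_univ, Fintype.card_fin]
    have hcard2 : ((Finset.univ : Finset (Fin d)).sigma fun k => (V k).offDiag).card
        ≤ d * (h * h - h) := by
      rw [Finset.card_sigma]
      calc ∑ k, (V k).offDiag.card ≤ ∑ _k : Fin d, (h * h - h) := by
            apply Finset.sum_le_sum
            intro k _
            rw [Finset.offDiag_card]
            have hc := hhk k
            have : (V k).card * (V k).card ≤ h * h := Nat.mul_le_mul hc hc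
            have h2 : (V k).card * (V k).card - (V k).card
                = (V k).card * ((V k).card - 1) := by
              cases Nat.eq_zero_or_pos (V k).card with
              | inl h0 => simp [h0]
              | inr h0 => rw [Nat.mul_sub_one, Nat.mul_comm]  -- may fail; fallback below
            have h3 : h * h - h = h * (h - 1) := by
              cases Nat.eq_zero_or_pos h with
              | inl h0 => simp [h0]
              | inr h0 => rw [Nat.mul_sub_one, Nat.mul_comm]
            rw [h2, h3]
            exact Nat.mul_le_mul hc (Nat.sub_le_sub_right hc 1)
        _ = d * (h * h - h) := by simp [Finset.sum_const, Finset.card_univ, mul_comm]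
    omega
  have hkey : r * r ≤ d * (h * h) := by
    have hhh : h ≤ h * h := by
      cases Nat.eq_zero_or_pos h with
      | inl h0 => simp [h0]
      | inr h0 => exact Nat.le_mul_of_pos_left h h0
    have e1 : d * (h * h - h) + d * h = d * (h * h) := by
      rw [← Nat.mul_add, Nat.sub_add_cancel hhh]
    omega
  have hd0 : (0:ℝ) ≤ d := by positivity
  have hh0 : (0:ℝ) ≤ (h:ℝ) := by positivity
  have : (r:ℝ) ≤ Real.sqrt (d * (h * h)) := by
    rw [Real.le_sqrt (by positivity)]
    · have : ((r*r : ℕ) : ℝ) ≤ ((d * (h*h) : ℕ) : ℝ) := by exact_mod_cast hkey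
      push_cast at this
      nlinarith [this]
    · positivity
  calc (r:ℝ) ≤ Real.sqrt ((d:ℝ) * (h * h)) := this
    _ = Real.sqrt d * Real.sqrt ((h:ℝ) * h) := Real.sqrt_mul hd0 _
    _ = Real.sqrt d * h := by rw [Real.sqrt_mul_self hh0]
end

section
/- For every d ≥ 1, ⌈√d⌉ ≥ √d / 2 · 2, i.e., the lower-bound instance of the BPPS with r = ⌈√d⌉ unit-size items, one scenario per pair of items each containing exactly those two items, and the solution placing each item in its own bin, satisfies: the solution is minimal, its VBPP value is r, its BPPS value is 2, and r ≥ (√d/2)·2. -/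
open scoped Classical
/-- The lower-bound BPPS instance: `r = ⌈√d⌉` unit-size items, one scenario per
ordered pair `(i,j)` with `i < j` containing exactly items `i` and `j`, and the
solution placing each item in its own singleton bin.  This solution is minimal,
its VBPP value is `r`, its BPPS value is `2` (every scenario uses exactly two
bins), and `r ≥ (√d / 2) · 2`. -/
theorem stmt_2 (d : ℕ) (hd : 1 ≤ d) :
    ∀ r : ℕ, r = ⌈Real.sqrt d⌉₊ →
    -- membership of item i in scenario (p.1, p.2):
    ∀ mem : Fin r → Fin r × Fin r → Prop, (∀ i p, mem i p ↔ (i = p.1 ∨ i = p.2)) →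
      -- minimality: any two distinct (singleton) bins are incompatible in some scenario
      ((∀ i j : Fin r, i ≠ j → ∃ p : Fin r × Fin r, p.1 < p.2 ∧
          ((if mem i p then (1 : ℝ) else 0) + (if mem j p then (1 : ℝ) else 0)) > 1) ∧
        -- the VBPP value (number of bins) equals r
        (Finset.univ : Finset (Fin r)).card = r ∧
        -- the BPPS value is 2: each scenario touches exactly two bins
        (∀ p : Fin r × Fin r, p.1 < p.2 →
          (Finset.univ.filter (fun i : Fin r => mem i p)).card = 2) ∧
        -- and r ≥ (√d / 2) · 2
        (r : ℝ) ≥ Real.sqrt d / 2 * 2) := by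
  intro r hr mem hmem
  refine ⟨?_, ?_, ?_, ?_⟩
  · intro i j hij
    rcases lt_or_gt_of_ne hij with h | h
    · refine ⟨(i, j), h, ?_⟩
      rw [if_pos ((hmem i (i, j)).mpr (Or.inl rfl)),
        if_pos ((hmem j (i, j)).mpr (Or.inr rfl))]
      norm_num
    · refine ⟨(j, i), h, ?_⟩
      rw [if_pos ((hmem i (j, i)).mpr (Or.inr rfl)),
        if_pos ((hmem j (j, i)).mpr (Or.inl rfl))]
      norm_num
  · simp
  · intro p hp
    have : (Finset.univ.filter (fun i : Fin r => mem i p)) = {p.1, p.2} := by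
      ext i
      simp [hmem i p]
    rw [this, Finset.card_insert_of_notMem (by simp [hp.ne]), Finset.card_singleton]
  · rw [div_mul_cancel₀ _ (two_ne_zero), hr]
    exact Nat.le_ceil _
end

section
/- Let B be a minimal solution of a BPPS instance with d scenarios. Then the number of bins of B (its VBPP value) is at most √d times its BPPS value (the maximum over scenarios of the number of bins used in that scenario). -/
open scoped Classical
open Finset

noncomputable section

/-- The items of bin `b` that belong to scenario `k`. -/
def scenarioItems {ι : Type*} {d : ℕ} (K : ι → Finset (Fin d))
    (b : Finset ι) (k : Fin d) : Finset ι :=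
  b.filter (fun i => k ∈ K i)

/-- `bins` is a feasible BPPS solution: a partition of the items into nonempty
bins such that, in every bin and every scenario, the total size of the items of
that scenario is at most the capacity `W`. -/
def IsSolution {ι : Type*} {d : ℕ} (s : ι → ℝ) (K : ι → Finset (Fin d))
    (W : ℝ) (bins : Finset (Finset ι)) : Prop :=
  (∀ i : ι, ∃ b ∈ bins, i ∈ b) ∧
  (∀ b ∈ bins, ∀ b' ∈ bins, b ≠ b' → Disjoint b b') ∧
  (∅ ∉ bins) ∧
  (∀ b ∈ bins, ∀ k : Fin d, ∑ i ∈ scenarioItems K b k, s i ≤ W)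

/-- The VBPP value of a solution: the total number of bins. -/
def valVBPP {ι : Type*} (bins : Finset (Finset ι)) : ℕ := bins.card

/-- The BPPS value of a solution: the maximum over the scenarios of the number
of bins containing an item of that scenario. -/
def valBPPS {ι : Type*} {d : ℕ} (K : ι → Finset (Fin d))
    (bins : Finset (Finset ι)) : ℕ :=
  Finset.univ.sup fun k : Fin d => (bins.filter fun b => ∃ i ∈ b, k ∈ K i).card

/-- Minimality: for any two bins there is a scenario in which their combined
load exceeds the capacity. -/
def MinimalSol {ι : Type*} {d : ℕ} (s : ι → ℝ) (K : ι → Finset (Fin d))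
    (W : ℝ) (bins : Finset (Finset ι)) : Prop :=
  ∀ A ∈ bins, ∀ B ∈ bins, ∃ k : Fin d,
    (∑ i ∈ scenarioItems K A k, s i) + (∑ i ∈ scenarioItems K B k, s i) > W

/-- The optimal BPPS value of an instance. -/
def optBPPS {ι : Type*} [Fintype ι] {d : ℕ} (s : ι → ℝ) (K : ι → Finset (Fin d))
    (W : ℝ) : ℕ :=
  sInf {v : ℕ | ∃ bins : Finset (Finset ι), IsSolution s K W bins ∧ valBPPS K bins = v}

/-- Theorem 1: if `B` is a minimal solution of a BPPS instance with `d`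
scenarios (unit capacity), then `val_VBPP(B) ≤ √d · val_BPPS(B)`. -/
theorem stmt_3 {ι : Type*} [Fintype ι] (d : ℕ) (s : ι → ℝ) (hs : ∀ i, 0 < s i)
    (K : ι → Finset (Fin d)) (bins : Finset (Finset ι))
    (hsol : IsSolution s K 1 bins) (hmin : MinimalSol s K 1 bins) :
    (valVBPP bins : ℝ) ≤ Real.sqrt d * valBPPS K bins := by
  set m := valBPPS K bins with hm
  have key : (valVBPP bins) ^ 2 ≤ d * m ^ 2 := by
    have hsub : bins ×ˢ bins ⊆ Finset.univ.biUnion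
        (fun k : Fin d => (bins.filter fun b => ∃ i ∈ b, k ∈ K i) ×ˢ
          (bins.filter fun b => ∃ i ∈ b, k ∈ K i)) := by
      intro p hp
      rw [Finset.mem_product] at hp
      obtain ⟨hA, hB⟩ := hp
      obtain ⟨k, hk⟩ := hmin p.1 hA p.2 hB
      have h1 : ∑ i ∈ scenarioItems K p.1 k, s i ≤ 1 := hsol.2.2.2 p.1 hA k
      have h2 : ∑ i ∈ scenarioItems K p.2 k, s i ≤ 1 := hsol.2.2.2 p.2 hB k
      have hApos : 0 < ∑ i ∈ scenarioItems K p.1 k, s i := by linarith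
      have hBpos : 0 < ∑ i ∈ scenarioItems K p.2 k, s i := by linarith
      have hAne : (scenarioItems K p.1 k).Nonempty := by
        by_contra h
        rw [Finset.not_nonempty_iff_eq_empty] at h
        rw [h, Finset.sum_empty] at hApos
        exact lt_irrefl _ hApos
      have hBne : (scenarioItems K p.2 k).Nonempty := by
        by_contra h
        rw [Finset.not_nonempty_iff_eq_empty] at h
        rw [h, Finset.sum_empty] at hBpos
        exact lt_irrefl _ hBpos
      obtain ⟨i, hi⟩ := hAne
      obtain ⟨j, hj⟩ := hBne
      simp only [scenarioItems, Finset.mem_filter] at hi hj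
      refine Finset.mem_biUnion.mpr ⟨k, Finset.mem_univ k, ?_⟩
      rw [Finset.mem_product]
      exact ⟨Finset.mem_filter.mpr ⟨hA, ⟨i, hi.1, hi.2⟩⟩,
             Finset.mem_filter.mpr ⟨hB, ⟨j, hj.1, hj.2⟩⟩⟩
    have hc : ∀ k : Fin d,
        (bins.filter fun b => ∃ i ∈ b, k ∈ K i).card ≤ m := by
      intro k
      rw [hm, valBPPS]
      exact Finset.le_sup (f := fun k : Fin d => (bins.filter fun b => ∃ i ∈ b, k ∈ K i).card) (Finset.mem_univ k)
    calc (valVBPP bins) ^ 2 = (bins ×ˢ bins).card := by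
          simp [valVBPP, Finset.card_product, sq]
      _ ≤ (Finset.univ.biUnion
          (fun k : Fin d => (bins.filter fun b => ∃ i ∈ b, k ∈ K i) ×ˢ
            (bins.filter fun b => ∃ i ∈ b, k ∈ K i))).card :=
          Finset.card_le_card hsub
      _ ≤ ∑ k : Fin d, ((bins.filter fun b => ∃ i ∈ b, k ∈ K i) ×ˢ
            (bins.filter fun b => ∃ i ∈ b, k ∈ K i)).card :=
          Finset.card_biUnion_le
      _ ≤ ∑ _k : Fin d, m ^ 2 := by
          refine Finset.sum_le_sum fun k _ => ?_
          rw [Finset.card_product, sq]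
          exact Nat.mul_le_mul (hc k) (hc k)
      _ = d * m ^ 2 := by simp [Finset.sum_const, Finset.card_univ]
  have keyR : ((valVBPP bins : ℝ)) ^ 2 ≤ (d : ℝ) * (m : ℝ) ^ 2 := by
    exact_mod_cast key
  have h0 : (valVBPP bins : ℝ) = Real.sqrt ((valVBPP bins : ℝ) ^ 2) :=
    (Real.sqrt_sq (by positivity)).symm
  rw [h0]
  calc Real.sqrt ((valVBPP bins : ℝ) ^ 2)
      ≤ Real.sqrt ((d : ℝ) * (m : ℝ) ^ 2) := Real.sqrt_le_sqrt keyR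
    _ = Real.sqrt d * m := by
        rw [Real.sqrt_mul (by positivity), Real.sqrt_sq (by positivity)]
end
end

section
/- If there exists an α-approximation algorithm for the Vector Bin Packing Problem, then mapping a BPPS instance to the VBPP instance where item i has coordinate s_i in dimension k if k ∈ K_i and 0 otherwise yields an α√d-approximation for BPPS. Formally: if B is a solution with val_VBPP(B) ≤ α · val_VBPP(B*_V) for an optimal VBPP solution B*_V, and B*_S is a minimal optimal BPPS solution, then val_BPPS(B) ≤ α√d · val_BPPS(B*_S). -/
open scoped Classical
open Finset

noncomputable section

/-- Corollary 2: an `α`-approximation for the VBPP yields an `α√d`-approximation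
for the BPPS via the natural mapping of instances.  If `B` is a solution with
`val_VBPP(B) ≤ α · val_VBPP(B*_V)` for a VBPP-optimal solution `B*_V`, and
`B*_S` is a minimal BPPS-optimal solution, then
`val_BPPS(B) ≤ α√d · val_BPPS(B*_S)`. -/
theorem stmt_4 {ι : Type*} [Fintype ι] (d : ℕ) (s : ι → ℝ) (hs : ∀ i, 0 < s i)
    (K : ι → Finset (Fin d)) (α : ℝ) (hα : 1 ≤ α)
    (B BV BS : Finset (Finset ι))
    (hB : IsSolution s K 1 B) (hBV : IsSolution s K 1 BV) (hBS : IsSolution s K 1 BS)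
    -- B*_V is an optimal VBPP solution
    (hVopt : ∀ C : Finset (Finset ι), IsSolution s K 1 C → valVBPP BV ≤ valVBPP C)
    -- B*_S is a minimal optimal BPPS solution
    (hSopt : ∀ C : Finset (Finset ι), IsSolution s K 1 C → valBPPS K BS ≤ valBPPS K C)
    (hSmin : MinimalSol s K 1 BS)
    -- B is the α-approximate VBPP solution
    (happrox : (valVBPP B : ℝ) ≤ α * valVBPP BV) :
    (valBPPS K B : ℝ) ≤ α * Real.sqrt d * valBPPS K BS := by
  have hα0 : (0:ℝ) ≤ α := le_trans zero_le_one hα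
  -- Step 1: valBPPS K B ≤ valVBPP B
  have h1 : valBPPS K B ≤ valVBPP B := by
    apply Finset.sup_le
    intro k _
    exact Finset.card_filter_le _ _
  -- Step 2: valVBPP BV ≤ valVBPP BS
  have h2 : valVBPP BV ≤ valVBPP BS := hVopt BS hBS
  -- Step 3 (key): (valVBPP BS : ℝ) ≤ √d * valBPPS K BS
  set F : Fin d → Finset (Finset ι) :=
    fun k => BS.filter fun b => ∃ i ∈ b, k ∈ K i with hF
  have hsubset : BS ×ˢ BS ⊆ Finset.univ.biUnion (fun k => (F k) ×ˢ (F k)) := by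
    intro p hp
    rw [Finset.mem_product] at hp
    obtain ⟨k, hk⟩ := hSmin p.1 hp.1 p.2 hp.2
    have hA1 : ∑ i ∈ scenarioItems K p.1 k, s i ≤ 1 := hBS.2.2.2 p.1 hp.1 k
    have hB1 : ∑ i ∈ scenarioItems K p.2 k, s i ≤ 1 := hBS.2.2.2 p.2 hp.2 k
    have hApos : 0 < ∑ i ∈ scenarioItems K p.1 k, s i := by linarith
    have hBpos : 0 < ∑ i ∈ scenarioItems K p.2 k, s i := by linarith
    have hAne : (scenarioItems K p.1 k).Nonempty := by
      by_contra h
      rw [Finset.not_nonempty_iff_eq_empty] at h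
      rw [h, Finset.sum_empty] at hApos; exact lt_irrefl 0 hApos
    have hBne : (scenarioItems K p.2 k).Nonempty := by
      by_contra h
      rw [Finset.not_nonempty_iff_eq_empty] at h
      rw [h, Finset.sum_empty] at hBpos; exact lt_irrefl 0 hBpos
    refine Finset.mem_biUnion.2 ⟨k, Finset.mem_univ k, Finset.mem_product.2 ⟨?_, ?_⟩⟩
    · obtain ⟨i, hi⟩ := hAne
      rw [scenarioItems, Finset.mem_filter] at hi
      exact Finset.mem_filter.2 ⟨hp.1, ⟨i, hi.1, hi.2⟩⟩
    · obtain ⟨i, hi⟩ := hBne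
      rw [scenarioItems, Finset.mem_filter] at hi
      exact Finset.mem_filter.2 ⟨hp.2, ⟨i, hi.1, hi.2⟩⟩
  have hsq : BS.card ^ 2 ≤ d * (valBPPS K BS) ^ 2 := by
    calc BS.card ^ 2 = (BS ×ˢ BS).card := by
          rw [Finset.card_product]; ring
      _ ≤ (Finset.univ.biUnion (fun k => (F k) ×ˢ (F k))).card :=
          Finset.card_le_card hsubset
      _ ≤ ∑ k : Fin d, ((F k) ×ˢ (F k)).card := Finset.card_biUnion_le
      _ = ∑ k : Fin d, (F k).card ^ 2 := by
          apply Finset.sum_congr rfl; intro k _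
          rw [Finset.card_product]; ring
      _ ≤ ∑ _k : Fin d, (valBPPS K BS) ^ 2 := by
          apply Finset.sum_le_sum; intro k _
          apply Nat.pow_le_pow_left
          exact Finset.le_sup (f := fun k : Fin d => ((BS.filter fun b => ∃ i ∈ b, k ∈ K i)).card) (Finset.mem_univ k)
      _ = d * (valBPPS K BS) ^ 2 := by
          rw [Finset.sum_const, Finset.card_univ, Fintype.card_fin, smul_eq_mul]
  have h3 : (valVBPP BS : ℝ) ≤ Real.sqrt d * valBPPS K BS := by
    have hsqR : ((BS.card : ℝ)) ^ 2 ≤ (d : ℝ) * ((valBPPS K BS : ℝ)) ^ 2 := by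
      have := hsq
      push_cast
      exact_mod_cast hsq
    have : (BS.card : ℝ) = Real.sqrt ((BS.card : ℝ) ^ 2) := by
      rw [Real.sqrt_sq (Nat.cast_nonneg _)]
    rw [valVBPP, this]
    calc Real.sqrt ((BS.card : ℝ) ^ 2)
        ≤ Real.sqrt ((d : ℝ) * ((valBPPS K BS : ℝ)) ^ 2) := Real.sqrt_le_sqrt hsqR
      _ = Real.sqrt d * valBPPS K BS := by
          rw [Real.sqrt_mul (Nat.cast_nonneg _), Real.sqrt_sq (Nat.cast_nonneg _)]
  -- Chain everything
  calc (valBPPS K B : ℝ) ≤ (valVBPP B : ℝ) := by exact_mod_cast h1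
    _ ≤ α * valVBPP BV := happrox
    _ ≤ α * valVBPP BS := by
        apply mul_le_mul_of_nonneg_left _ hα0
        exact_mod_cast h2
    _ ≤ α * (Real.sqrt d * valBPPS K BS) := mul_le_mul_of_nonneg_left h3 hα0
    _ = α * Real.sqrt d * valBPPS K BS := by ring
end
end

section
/- Let I be a BPPS instance with d scenarios and 0 < ε ≤ 1/2 with 1/ε an integer. Let Î be obtained from I by removing all items of size < ε² and, for each type t, adding ⌈(∑_{i ∈ S_t} s_i)/(ε − ε²)⌉ items of size ε and type t, where S_t is the set of removed (small) items of type t. Then opt(Î) ≤ (1 + 2^{d+1}(d+1)ε)·opt(I) + 1. -/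
open scoped Classical
open Finset

noncomputable section

/-- The number of size-`ε` replacement items of type `t` in the instance `Î`:
`⌈(∑_{i ∈ S_t} s_i)/(ε - ε²)⌉`, where `S_t` is the set of small items
(size `< ε²`) of type `t`. -/
abbrev replCount {ι : Type*} [Fintype ι] {d : ℕ} (s : ι → ℝ) (K : ι → Finset (Fin d))
    (ε : ℝ) (t : Finset (Fin d)) : ℕ :=
  ⌈(∑ i ∈ Finset.univ.filter (fun i : ι => s i < ε ^ 2 ∧ K i = t), s i) / (ε - ε ^ 2)⌉₊

/-- The items of `Î`: the large items of `I` together with, for each type `t`,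
`replCount s K ε t` new items. -/
abbrev HatItems {ι : Type*} [Fintype ι] {d : ℕ} (s : ι → ℝ) (K : ι → Finset (Fin d))
    (ε : ℝ) : Type _ :=
  {i : ι // ε ^ 2 ≤ s i} ⊕ (Σ t : Finset (Fin d), Fin (replCount s K ε t))

/-- Sizes in `Î`: large items keep their size, each new item has size `ε`. -/
abbrev hatSize {ι : Type*} [Fintype ι] {d : ℕ} (s : ι → ℝ) (K : ι → Finset (Fin d))
    (ε : ℝ) : HatItems s K ε → ℝ :=
  Sum.elim (fun i => s i.1) (fun _ => ε)

/-- Scenario sets in `Î`: large items keep their scenario set, each new item of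
type `t` gets scenario set `t`. -/
abbrev hatScen {ι : Type*} [Fintype ι] {d : ℕ} (s : ι → ℝ) (K : ι → Finset (Fin d))
    (ε : ℝ) : HatItems s K ε → Finset (Fin d) :=
  Sum.elim (fun i => K i.1) (fun p => p.1)

/- ### auxiliary constructions for the proof -/
set_option linter.unusedSectionVars false

section L8
variable {ι : Type*} [Fintype ι] {d : ℕ}

/-- total size of small items of type `t` in bin `b` -/
def Sb (s : ι → ℝ) (K : ι → Finset (Fin d)) (ε : ℝ) (b : Finset ι) (t : Finset (Fin d)) : ℝ :=
  ∑ i ∈ b.filter (fun i => s i < ε ^ 2 ∧ K i = t), s i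

/-- quota of replacement ε-items of type `t` for bin `b` -/
def nbq (s : ι → ℝ) (K : ι → Finset (Fin d)) (ε : ℝ) (b : Finset ι) (t : Finset (Fin d)) : ℕ :=
  ⌊Sb s K ε b t / ε⌋₊

/-- total quota of type `t` -/
def Qt (s : ι → ℝ) (K : ι → Finset (Fin d)) (ε : ℝ) (B : Finset (Finset ι))
    (t : Finset (Fin d)) : ℕ :=
  ∑ b ∈ B, nbq s K ε b t

lemma card_sigq (s : ι → ℝ) (K : ι → Finset (Fin d)) (ε : ℝ) (B : Finset (Finset ι))
    (t : Finset (Fin d)) :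
    Fintype.card (Σ b : {x // x ∈ B}, Fin (nbq s K ε b.1 t)) = Qt s K ε B t := by
  rw [Fintype.card_sigma]
  simp only [Fintype.card_fin]
  rw [Qt, ← Finset.sum_coe_sort B (fun b => nbq s K ε b t)]

noncomputable def qEquiv (s : ι → ℝ) (K : ι → Finset (Fin d)) (ε : ℝ) (B : Finset (Finset ι))
    (t : Finset (Fin d)) : Fin (Qt s K ε B t) ≃ Σ b : {x // x ∈ B}, Fin (nbq s K ε b.1 t) :=
  (Fintype.equivFinOfCardEq (card_sigq s K ε B t)).symm

/-- overflow replacement items -/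
def OvP (s : ι → ℝ) (K : ι → Finset (Fin d)) (ε : ℝ) (B : Finset (Finset ι))
    (p : Σ t : Finset (Fin d), Fin (replCount s K ε t)) : Prop :=
  p.1 ≠ ∅ ∧ Qt s K ε B p.1 ≤ (p.2 : ℕ)

noncomputable def rankO (s : ι → ℝ) (K : ι → Finset (Fin d)) (ε : ℝ) (B : Finset (Finset ι))
    (p : Subtype (OvP s K ε B)) : ℕ :=
  (Fintype.equivFin (Subtype (OvP s K ε B)) p : ℕ)

lemma rankO_lt (s : ι → ℝ) (K : ι → Finset (Fin d)) (ε : ℝ) (B : Finset (Finset ι))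
    (p : Subtype (OvP s K ε B)) :
    rankO s K ε B p < Fintype.card (Subtype (OvP s K ε B)) :=
  (Fintype.equivFin (Subtype (OvP s K ε B)) p).isLt

lemma rankO_inj (s : ι → ℝ) (K : ι → Finset (Fin d)) (ε : ℝ) (B : Finset (Finset ι)) :
    Function.Injective (rankO s K ε B) := fun p q h => by
  have := (Fintype.equivFin (Subtype (OvP s K ε B))).injective (Fin.ext h)
  exact this

/-- the assignment of hat items to bins: `inl b` = old bin `b`, `inr e` = extra bin `e`. -/
noncomputable def fA (s : ι → ℝ) (K : ι → Finset (Fin d)) (ε : ℝ) (B : Finset (Finset ι))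
    (g : ι → Finset ι) (M : ℕ) : HatItems s K ε → Finset ι ⊕ ℕ :=
  Sum.elim (fun i => Sum.inl (g i.1))
    (fun p =>
      if hp : p.1 = ∅ then Sum.inl ∅
      else if h : (p.2 : ℕ) < Qt s K ε B p.1 then
        Sum.inl ((qEquiv s K ε B p.1 ⟨p.2, h⟩).1 : Finset ι)
      else Sum.inr (rankO s K ε B ⟨p, hp, le_of_not_gt h⟩ / M))

noncomputable def hatBins (s : ι → ℝ) (K : ι → Finset (Fin d)) (ε : ℝ) (B : Finset (Finset ι))
    (g : ι → Finset ι) (M : ℕ) : Finset (Finset (HatItems s K ε)) :=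
  (univ.image (fA s K ε B g M)).image fun c => univ.filter fun x => fA s K ε B g M x = c

lemma sum_partition' (B : Finset (Finset ι)) (hcov : ∀ i : ι, ∃ b ∈ B, i ∈ b)
    (hdisj : ∀ b ∈ B, ∀ b' ∈ B, b ≠ b' → Disjoint b b') (P : ι → Prop) [DecidablePred P]
    (f : ι → ℝ) :
    ∑ i ∈ univ.filter (fun i => P i), f i = ∑ b ∈ B, ∑ i ∈ b.filter (fun i => P i), f i := by
  rw [← Finset.sum_biUnion (by
    intro b hb b' hb' hne
    exact Finset.disjoint_filter_filter (hdisj b hb b' hb' hne))]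
  congr 1
  ext i
  simp only [Finset.mem_biUnion, Finset.mem_filter, Finset.mem_univ, true_and]
  constructor
  · intro hP
    obtain ⟨b, hbB, hib⟩ := hcov i
    exact ⟨b, hbB, hib, hP⟩
  · rintro ⟨b, hbB, _, hP⟩
    exact hP

end L8

section L8b
variable {ι : Type*} [Fintype ι] {d : ℕ}

lemma sigma_fin_ext {κ : Type*} {n : κ → ℕ} {x y : Σ b : κ, Fin (n b)}
    (h1 : x.1 = y.1) (h2 : (x.2 : ℕ) = (y.2 : ℕ)) : x = y := by
  obtain ⟨a, i⟩ := x
  obtain ⟨b, j⟩ := y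
  cases h1
  exact congrArg (Sigma.mk a) (Fin.ext h2)

lemma Sb_nonneg (s : ι → ℝ) (K : ι → Finset (Fin d)) (ε : ℝ) (hpos : ∀ i, 0 < s i)
    (b : Finset ι) (t : Finset (Fin d)) : 0 ≤ Sb s K ε b t :=
  Finset.sum_nonneg fun i _ => (hpos i).le

lemma exists_of_Sb_pos {s : ι → ℝ} {K : ι → Finset (Fin d)} {ε : ℝ} {b : Finset ι}
    {t : Finset (Fin d)} (h : 0 < Sb s K ε b t) : ∃ i ∈ b, s i < ε ^ 2 ∧ K i = t := by
  by_contra hc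
  have hemp : b.filter (fun i => s i < ε ^ 2 ∧ K i = t) = ∅ := by
    rw [Finset.filter_eq_empty_iff]
    intro i hi hcontra
    exact hc ⟨i, hi, hcontra⟩
  rw [Sb, hemp, Finset.sum_empty] at h
  exact lt_irrefl 0 h

lemma Sb_pos_of_nbq_pos {s : ι → ℝ} {K : ι → Finset (Fin d)} {ε : ℝ} (hε0 : 0 < ε)
    {b : Finset ι} {t : Finset (Fin d)} (h : 0 < nbq s K ε b t) : 0 < Sb s K ε b t := by
  have h1 : (1 : ℝ) ≤ Sb s K ε b t / ε := Nat.floor_pos.mp h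
  have h2 : ε ≤ Sb s K ε b t := (one_le_div hε0).mp h1
  linarith

/-- uniqueness of the bin of an item -/
lemma g_eq_iff {s : ι → ℝ} {K : ι → Finset (Fin d)} {B : Finset (Finset ι)}
    (hB : IsSolution s K 1 B) {g : ι → Finset ι} (hg : ∀ i, g i ∈ B ∧ i ∈ g i)
    (i : ι) {b₀ : Finset ι} (hb₀ : b₀ ∈ B) : g i = b₀ ↔ i ∈ b₀ := by
  constructor
  · rintro rfl
    exact (hg i).2
  · intro hib
    by_contra hne
    have hd := hB.2.1 _ (hg i).1 _ hb₀ hne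
    exact (Finset.disjoint_left.mp hd) (hg i).2 hib

/-- destination bin of an item containing scenario `k` is an old bin with a `k`-item -/
lemma fA_scen_inl {s : ι → ℝ} {K : ι → Finset (Fin d)} {ε : ℝ} (hε0 : 0 < ε)
    {B : Finset (Finset ι)} {g : ι → Finset ι} {M : ℕ}
    (hg : ∀ i, g i ∈ B ∧ i ∈ g i) {x : HatItems s K ε} {b₀ : Finset ι} {k : Fin d}
    (hx : fA s K ε B g M x = Sum.inl b₀) (hk : k ∈ hatScen s K ε x) :
    b₀ ∈ B ∧ ∃ i ∈ b₀, k ∈ K i := by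
  cases x with
  | inl i =>
    simp only [fA, Sum.elim_inl, Sum.inl.injEq] at hx
    subst hx
    exact ⟨(hg i.1).1, i.1, (hg i.1).2, hk⟩
  | inr p =>
    have hk' : k ∈ p.1 := hk
    have hp : p.1 ≠ ∅ := Finset.ne_empty_of_mem hk'
    simp only [fA, Sum.elim_inr, dif_neg hp] at hx
    by_cases hq : (p.2 : ℕ) < Qt s K ε B p.1
    · rw [dif_pos hq] at hx
      simp only [Sum.inl.injEq] at hx
      set a := qEquiv s K ε B p.1 ⟨p.2, hq⟩ with ha
      have hmem : (a.1 : Finset ι) ∈ B := a.1.2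
      have hb : (a.1 : Finset ι) = b₀ := hx
      have hnb : 0 < nbq s K ε (a.1 : Finset ι) p.1 := a.2.pos
      have hSb : 0 < Sb s K ε (a.1 : Finset ι) p.1 := Sb_pos_of_nbq_pos hε0 hnb
      obtain ⟨i, hib, _, hKi⟩ := exists_of_Sb_pos hSb
      rw [hb] at hmem hib
      exact ⟨hmem, i, hib, hKi ▸ hk'⟩
    · rw [dif_neg hq] at hx
      exact absurd hx (by simp)

end L8b

section L8c
variable {ι : Type*} [Fintype ι] {d : ℕ}

/-- the replacement items of type `t` assigned to an old bin `b₀` contribute at most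
the small load `Sb b₀ t`. -/
lemma inner_repl_bound {s : ι → ℝ} {K : ι → Finset (Fin d)} {ε : ℝ} (hε0 : 0 < ε)
    (hpos : ∀ i, 0 < s i) (B : Finset (Finset ι)) (g : ι → Finset ι) (M : ℕ)
    (b₀ : Finset ι) (k : Fin d) (t : Finset (Fin d)) :
    (∑ j : Fin (replCount s K ε t),
      if (fA s K ε B g M (Sum.inr ⟨t, j⟩) = Sum.inl b₀ ∧ k ∈ t) then ε else 0)
      ≤ if k ∈ t then Sb s K ε b₀ t else 0 := by
  by_cases hk : k ∈ t
  · simp only [hk, and_true, if_true]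
    have ht : t ≠ ∅ := Finset.ne_empty_of_mem hk
    -- count the summands
    rw [← Finset.sum_filter]
    rw [Finset.sum_const, nsmul_eq_mul]
    -- card ≤ nbq b₀ t
    have hcard : (univ.filter fun j : Fin (replCount s K ε t) =>
        fA s K ε B g M (Sum.inr ⟨t, j⟩) = Sum.inl b₀).card ≤ nbq s K ε b₀ t := by
      have := Finset.card_le_card_of_injOn
        (f := fun j : Fin (replCount s K ε t) =>
          if h : (j : ℕ) < Qt s K ε B t then ((qEquiv s K ε B t ⟨j, h⟩).2 : ℕ) else 0)
        (s := univ.filter fun j : Fin (replCount s K ε t) =>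
          fA s K ε B g M (Sum.inr ⟨t, j⟩) = Sum.inl b₀)
        (t := Finset.range (nbq s K ε b₀ t)) ?_ ?_
      · simpa using this
      · intro j hj
        simp only [Finset.mem_coe] at hj ⊢
        rw [Finset.mem_filter] at hj
        have hx := hj.2
        simp only [fA, Sum.elim_inr, dif_neg ht] at hx
        by_cases hq : (j : ℕ) < Qt s K ε B t
        · rw [dif_pos hq] at hx
          simp only [Sum.inl.injEq] at hx
          simp only [dif_pos hq, Finset.mem_range]
          have hlt := ((qEquiv s K ε B t ⟨j, hq⟩).2).isLt
          exact lt_of_lt_of_eq hlt (by rw [hx])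
        · rw [dif_neg hq] at hx
          exact absurd hx (by simp)
      · intro j hj j' hj' heq
        simp only [Finset.coe_filter, Set.mem_setOf_eq, Finset.mem_univ, true_and] at hj hj'
        have hxj := hj; have hxj' := hj'
        simp only [fA, Sum.elim_inr, dif_neg ht] at hxj hxj'
        by_cases hq : (j : ℕ) < Qt s K ε B t
        · by_cases hq' : (j' : ℕ) < Qt s K ε B t
          · rw [dif_pos hq] at hxj
            rw [dif_pos hq'] at hxj'
            simp only [Sum.inl.injEq] at hxj hxj'
            simp only [dif_pos hq, dif_pos hq'] at heq
            have h1 : (qEquiv s K ε B t ⟨j, hq⟩).1 = (qEquiv s K ε B t ⟨j', hq'⟩).1 :=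
              Subtype.ext (hxj.trans hxj'.symm)
            have h2 := (qEquiv s K ε B t).injective (sigma_fin_ext h1 heq)
            have hval : (j : ℕ) = (j' : ℕ) := by simpa using h2
            exact Fin.ext hval
          · rw [dif_neg hq'] at hxj'
            exact absurd hxj' (by simp)
        · rw [dif_neg hq] at hxj
          exact absurd hxj (by simp)
    -- nbq * ε ≤ Sb
    have hfloor : (nbq s K ε b₀ t : ℝ) * ε ≤ Sb s K ε b₀ t := by
      have h1 : (nbq s K ε b₀ t : ℝ) ≤ Sb s K ε b₀ t / ε :=
        Nat.floor_le (div_nonneg (Sb_nonneg s K ε hpos b₀ t) hε0.le)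
      calc (nbq s K ε b₀ t : ℝ) * ε ≤ (Sb s K ε b₀ t / ε) * ε :=
            mul_le_mul_of_nonneg_right h1 hε0.le
        _ = Sb s K ε b₀ t := div_mul_cancel₀ _ hε0.ne'
    calc ((univ.filter fun j : Fin (replCount s K ε t) =>
            fA s K ε B g M (Sum.inr ⟨t, j⟩) = Sum.inl b₀).card : ℝ) * ε
        ≤ (nbq s K ε b₀ t : ℝ) * ε := by
          apply mul_le_mul_of_nonneg_right _ hε0.le
          exact_mod_cast hcard
      _ ≤ Sb s K ε b₀ t := hfloor
  · simp [hk]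

end L8c

section L8d
variable {ι : Type*} [Fintype ι] {d : ℕ}

lemma div_mem_Ico {n m e : ℕ} (hm : 0 < m) (he : n / m = e) :
    n ∈ Finset.Ico (e * m) (e * m + m) := by
  rw [Finset.mem_Ico]
  subst he
  refine ⟨Nat.div_mul_le_self n m, ?_⟩
  have h2 := (Nat.div_lt_iff_lt_mul hm).1 (Nat.lt_succ_self (n / m))
  rw [Nat.succ_mul] at h2
  exact h2

/-- capacity of an old bin `b₀ ∈ B` -/
lemma cap_old {s : ι → ℝ} {K : ι → Finset (Fin d)} {ε : ℝ} (hε0 : 0 < ε)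
    (hpos : ∀ i, 0 < s i) {B : Finset (Finset ι)} (hB : IsSolution s K 1 B)
    {g : ι → Finset ι} (hg : ∀ i, g i ∈ B ∧ i ∈ g i) (M : ℕ)
    {b₀ : Finset ι} (hb₀ : b₀ ∈ B) (k : Fin d) :
    ∑ x ∈ scenarioItems (hatScen s K ε)
        (univ.filter fun y => fA s K ε B g M y = Sum.inl b₀) k, hatSize s K ε x ≤ 1 := by
  have hset : scenarioItems (hatScen s K ε)
      (univ.filter fun y => fA s K ε B g M y = Sum.inl b₀) k
      = univ.filter (fun x => fA s K ε B g M x = Sum.inl b₀ ∧ k ∈ hatScen s K ε x) := by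
    rw [scenarioItems, Finset.filter_filter]
  rw [hset, Finset.sum_filter, Fintype.sum_sum_type]
  have hLP : (∑ i : {i // ε ^ 2 ≤ s i},
      if (fA s K ε B g M (Sum.inl i) = Sum.inl b₀ ∧ k ∈ hatScen s K ε (Sum.inl i))
        then hatSize s K ε (Sum.inl i) else 0)
      = ∑ i ∈ (scenarioItems K b₀ k).filter (fun i => ε ^ 2 ≤ s i), s i := by
    have h1 : ∀ i : {i // ε ^ 2 ≤ s i},
        (if (fA s K ε B g M (Sum.inl i) = Sum.inl b₀ ∧ k ∈ hatScen s K ε (Sum.inl i))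
          then hatSize s K ε (Sum.inl i) else 0)
        = (fun j : ι => if (j ∈ b₀ ∧ k ∈ K j) then s j else 0) i.1 := by
      intro i
      simp only [fA, Sum.elim_inl, hatSize, hatScen, Sum.inl.injEq,
        g_eq_iff hB hg i.1 hb₀]
    rw [Finset.sum_congr rfl (fun i _ => h1 i),
      ← Finset.sum_subtype (univ.filter (fun i : ι => ε ^ 2 ≤ s i)) (by simp)
        (fun j : ι => if (j ∈ b₀ ∧ k ∈ K j) then s j else 0),
      ← Finset.sum_filter]
    apply Finset.sum_congr _ (fun _ _ => rfl)
    ext i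
    simp only [Finset.mem_filter, Finset.mem_univ, true_and, scenarioItems]
    tauto
  have hRP : (∑ p : (Σ t : Finset (Fin d), Fin (replCount s K ε t)),
      if (fA s K ε B g M (Sum.inr p) = Sum.inl b₀ ∧ k ∈ hatScen s K ε (Sum.inr p))
        then hatSize s K ε (Sum.inr p) else 0)
      ≤ ∑ i ∈ (scenarioItems K b₀ k).filter (fun i => ¬ ε ^ 2 ≤ s i), s i := by
    have hsig : (∑ p : (Σ t : Finset (Fin d), Fin (replCount s K ε t)),
        if (fA s K ε B g M (Sum.inr p) = Sum.inl b₀ ∧ k ∈ hatScen s K ε (Sum.inr p))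
          then hatSize s K ε (Sum.inr p) else 0)
        = ∑ t : Finset (Fin d), ∑ j : Fin (replCount s K ε t),
            if (fA s K ε B g M (Sum.inr ⟨t, j⟩) = Sum.inl b₀ ∧ k ∈ t) then ε else 0 := by
      rw [← Finset.univ_sigma_univ, Finset.sum_sigma]
      rfl
    rw [hsig]
    calc (∑ t : Finset (Fin d), ∑ j : Fin (replCount s K ε t),
            if (fA s K ε B g M (Sum.inr ⟨t, j⟩) = Sum.inl b₀ ∧ k ∈ t) then ε else 0)
        ≤ ∑ t : Finset (Fin d), if k ∈ t then Sb s K ε b₀ t else 0 :=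
          Finset.sum_le_sum (fun t _ => inner_repl_bound hε0 hpos B g M b₀ k t)
      _ = ∑ t ∈ univ.filter (fun t => k ∈ t), Sb s K ε b₀ t := (Finset.sum_filter _ _).symm
      _ = ∑ i ∈ (b₀.filter (fun i => s i < ε ^ 2)).filter
            (fun i => K i ∈ univ.filter (fun t => k ∈ t)), s i := by
          rw [← Finset.sum_fiberwise_eq_sum_filter]
          apply Finset.sum_congr rfl
          intro t _
          rw [Sb, Finset.filter_filter]
      _ = ∑ i ∈ (scenarioItems K b₀ k).filter (fun i => ¬ ε ^ 2 ≤ s i), s i := by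
          apply Finset.sum_congr _ (fun _ _ => rfl)
          ext i
          simp only [Finset.mem_filter, Finset.mem_univ, true_and, scenarioItems, not_le]
          tauto
  have htot := hB.2.2.2 b₀ hb₀ k
  have hsplit : (∑ i ∈ (scenarioItems K b₀ k).filter (fun i => ε ^ 2 ≤ s i), s i)
      + (∑ i ∈ (scenarioItems K b₀ k).filter (fun i => ¬ ε ^ 2 ≤ s i), s i)
      = ∑ i ∈ scenarioItems K b₀ k, s i :=
    Finset.sum_filter_add_sum_filter_not _ _ _
  linarith [hLP, hRP]

/-- capacity of a phantom bin -/
lemma cap_notB {s : ι → ℝ} {K : ι → Finset (Fin d)} {ε : ℝ} (hε0 : 0 < ε)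
    {B : Finset (Finset ι)} {g : ι → Finset ι} {M : ℕ}
    (hg : ∀ i, g i ∈ B ∧ i ∈ g i) {b₀ : Finset ι} (hb₀ : b₀ ∉ B) (k : Fin d) :
    ∑ x ∈ scenarioItems (hatScen s K ε)
        (univ.filter fun y => fA s K ε B g M y = Sum.inl b₀) k, hatSize s K ε x ≤ 1 := by
  have hemp : scenarioItems (hatScen s K ε)
      (univ.filter fun y => fA s K ε B g M y = Sum.inl b₀) k = ∅ := by
    rw [scenarioItems, Finset.filter_eq_empty_iff]
    intro x hx
    rw [Finset.mem_filter] at hx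
    intro hk
    exact hb₀ (fA_scen_inl hε0 hg hx.2 hk).1
  rw [hemp, Finset.sum_empty]
  norm_num

/-- members of an extra bin -/
lemma mem_extra {s : ι → ℝ} {K : ι → Finset (Fin d)} {ε : ℝ} {B : Finset (Finset ι)}
    {g : ι → Finset ι} {M : ℕ} {e : ℕ} {x : HatItems s K ε}
    (hx : fA s K ε B g M x = Sum.inr e) :
    ∃ p, ∃ hp : OvP s K ε B p, x = Sum.inr p ∧ rankO s K ε B ⟨p, hp⟩ / M = e := by
  cases x with
  | inl i => simp [fA] at hx
  | inr p =>
    simp only [fA, Sum.elim_inr] at hx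
    by_cases hp : p.1 = ∅
    · rw [dif_pos hp] at hx
      exact absurd hx (by simp)
    · rw [dif_neg hp] at hx
      by_cases hq : (p.2 : ℕ) < Qt s K ε B p.1
      · rw [dif_pos hq] at hx
        exact absurd hx (by simp)
      · rw [dif_neg hq] at hx
        simp only [Sum.inr.injEq] at hx
        exact ⟨p, ⟨hp, le_of_not_gt hq⟩, rfl, hx⟩

/-- capacity of an extra bin -/
lemma cap_extra {s : ι → ℝ} {K : ι → Finset (Fin d)} {ε : ℝ} (hε0 : 0 < ε)
    (hpos : ∀ i, 0 < s i) (B : Finset (Finset ι)) (g : ι → Finset ι) {M : ℕ}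
    (hM : (M : ℝ) * ε = 1) (hM0 : 0 < M) (e : ℕ) (k : Fin d) :
    ∑ x ∈ scenarioItems (hatScen s K ε)
        (univ.filter fun y => fA s K ε B g M y = Sum.inr e) k, hatSize s K ε x ≤ 1 := by
  set fib := univ.filter fun y => fA s K ε B g M y = Sum.inr e with hfib
  have h1 : ∑ x ∈ scenarioItems (hatScen s K ε) fib k, hatSize s K ε x
      ≤ ∑ x ∈ fib, hatSize s K ε x := by
    apply Finset.sum_le_sum_of_subset_of_nonneg (Finset.filter_subset _ _)
    intro x _ _
    cases x with
    | inl i => exact (hpos i.1).le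
    | inr p => exact hε0.le
  have hmemf : ∀ x ∈ fib, fA s K ε B g M x = Sum.inr e := by
    intro x hx
    rw [hfib, Finset.mem_filter] at hx
    exact hx.2
  have h2 : ∑ x ∈ fib, hatSize s K ε x = (fib.card : ℝ) * ε := by
    rw [Finset.sum_congr rfl (fun x hx => ?_), Finset.sum_const, nsmul_eq_mul]
    obtain ⟨p, hp, rfl, _⟩ := mem_extra (hmemf x hx)
    rfl
  have h3 : fib.card ≤ M := by
    have hle := Finset.card_le_card_of_injOn
      (f := fun x : HatItems s K ε => Sum.elim (fun _ => 0)
        (fun p => if hp : OvP s K ε B p then rankO s K ε B ⟨p, hp⟩ else 0) x)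
      (s := fib) (t := Finset.Ico (e * M) (e * M + M)) ?_ ?_
    · rw [Nat.card_Ico] at hle
      omega
    · intro x hx
      obtain ⟨p, hp, rfl, he⟩ := mem_extra (hmemf x hx)
      simp only [Sum.elim_inr, dif_pos hp]
      exact div_mem_Ico hM0 he
    · intro x hx y hy hxy
      obtain ⟨p, hp, rfl, _⟩ := mem_extra (hmemf x hx)
      obtain ⟨q, hq2, rfl, _⟩ := mem_extra (hmemf y hy)
      simp only [Sum.elim_inr, dif_pos hp, dif_pos hq2] at hxy
      have h4 := rankO_inj s K ε B hxy
      have h5 : p = q := congrArg Subtype.val h4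
      rw [h5]
  calc ∑ x ∈ scenarioItems (hatScen s K ε) fib k, hatSize s K ε x
      ≤ ∑ x ∈ fib, hatSize s K ε x := h1
    _ = (fib.card : ℝ) * ε := h2
    _ ≤ (M : ℝ) * ε := by
        apply mul_le_mul_of_nonneg_right _ hε0.le
        exact_mod_cast h3
    _ = 1 := hM

/-- the constructed bins form a feasible solution of `Î` -/
lemma hat_solution {s : ι → ℝ} {K : ι → Finset (Fin d)} {ε : ℝ} (hε0 : 0 < ε)
    (hpos : ∀ i, 0 < s i) {B : Finset (Finset ι)} (hB : IsSolution s K 1 B)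
    {g : ι → Finset ι} (hg : ∀ i, g i ∈ B ∧ i ∈ g i) {M : ℕ}
    (hM : (M : ℝ) * ε = 1) (hM0 : 0 < M) :
    IsSolution (hatSize s K ε) (hatScen s K ε) 1 (hatBins s K ε B g M) := by
  refine ⟨?_, ?_, ?_, ?_⟩
  · intro x
    refine ⟨univ.filter fun y => fA s K ε B g M y = fA s K ε B g M x, ?_, by simp⟩
    rw [hatBins]
    exact Finset.mem_image_of_mem _ (Finset.mem_image_of_mem _ (Finset.mem_univ x))
  · intro b hb b' hb' hne
    rw [hatBins, Finset.mem_image] at hb hb'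
    obtain ⟨c, _, rfl⟩ := hb
    obtain ⟨c', _, rfl⟩ := hb'
    rw [Finset.disjoint_left]
    intro x hx hx'
    rw [Finset.mem_filter] at hx hx'
    have hcc : c = c' := by rw [← hx.2, hx'.2]
    exact hne (by rw [hcc])
  · intro hemp
    rw [hatBins, Finset.mem_image] at hemp
    obtain ⟨c, hc, hcf⟩ := hemp
    rw [Finset.mem_image] at hc
    obtain ⟨x, _, rfl⟩ := hc
    have hx : x ∈ univ.filter fun y => fA s K ε B g M y = fA s K ε B g M x := by simp
    rw [hcf] at hx
    exact absurd hx (Finset.notMem_empty x)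
  · intro b hb k
    rw [hatBins, Finset.mem_image] at hb
    obtain ⟨c, _, rfl⟩ := hb
    cases c with
    | inl b₀ =>
      by_cases hb₀ : b₀ ∈ B
      · exact cap_old hε0 hpos hB hg M hb₀ k
      · exact cap_notB hε0 hg hb₀ k
    | inr e => exact cap_extra hε0 hpos B g hM hM0 e k

end L8d

section L8e
variable {ι : Type*} [Fintype ι] {d : ℕ}

lemma mem_hatBins_elim {s : ι → ℝ} {K : ι → Finset (Fin d)} {ε : ℝ}
    {B : Finset (Finset ι)} {g : ι → Finset ι} {M : ℕ} {b : Finset (HatItems s K ε)}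
    (hb : b ∈ hatBins s K ε B g M) :
    ∃ c, b = univ.filter fun y => fA s K ε B g M y = c := by
  rw [hatBins, Finset.mem_image] at hb
  obtain ⟨c, _, rfl⟩ := hb
  exact ⟨c, rfl⟩

/-- the extra-bin index is bounded -/
lemma fA_inr_le {s : ι → ℝ} {K : ι → Finset (Fin d)} {ε : ℝ} {B : Finset (Finset ι)}
    {g : ι → Finset ι} {M : ℕ} {e : ℕ} {x : HatItems s K ε}
    (hx : fA s K ε B g M x = Sum.inr e) :
    e ≤ (Fintype.card (Subtype (OvP s K ε B)) - 1) / M := by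
  obtain ⟨p, hp, rfl, he⟩ := mem_extra hx
  have h1 : rankO s K ε B ⟨p, hp⟩ ≤ Fintype.card (Subtype (OvP s K ε B)) - 1 :=
    Nat.le_sub_one_of_lt (rankO_lt s K ε B ⟨p, hp⟩)
  rw [← he]
  exact Nat.div_le_div_right h1

/-- the BPPS value of the constructed solution -/
lemma hat_val {s : ι → ℝ} {K : ι → Finset (Fin d)} {ε : ℝ} (hε0 : 0 < ε)
    {B : Finset (Finset ι)} (hB : IsSolution s K 1 B)
    {g : ι → Finset ι} (hg : ∀ i, g i ∈ B ∧ i ∈ g i) (M : ℕ) :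
    valBPPS (hatScen s K ε) (hatBins s K ε B g M)
      ≤ valBPPS K B + ((Fintype.card (Subtype (OvP s K ε B)) - 1) / M + 1) := by
  rw [valBPPS]
  apply Finset.sup_le
  intro k _
  set KO := (Fintype.card (Subtype (OvP s K ε B)) - 1) / M with hKO
  set T := (B.filter fun b => ∃ i ∈ b, k ∈ K i).image Sum.inl
    ∪ (Finset.range (KO + 1)).image (Sum.inr : ℕ → Finset ι ⊕ ℕ) with hT
  have hcard : ((hatBins s K ε B g M).filter
      fun b => ∃ x ∈ b, k ∈ hatScen s K ε x).card ≤ T.card := by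
    apply Finset.card_le_card_of_injOn
      (f := fun b => if h : ∃ x ∈ b, k ∈ hatScen s K ε x
        then fA s K ε B g M h.choose else Sum.inl ∅)
    · intro b hb
      simp only [Finset.mem_coe] at hb ⊢
      rw [Finset.mem_filter] at hb
      obtain ⟨hb1, hb2⟩ := hb
      rw [dif_pos hb2]
      obtain ⟨hxb, hkx⟩ := hb2.choose_spec
      obtain ⟨c, rfl⟩ := mem_hatBins_elim hb1
      rw [Finset.mem_filter] at hxb
      cases hfx : fA s K ε B g M hb2.choose with
      | inl b₀ =>
        obtain ⟨hb₀B, i, hib₀, hki⟩ := fA_scen_inl hε0 hg hfx hkx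
        rw [hT]
        apply Finset.mem_union_left
        rw [Finset.mem_image]
        exact ⟨b₀, Finset.mem_filter.mpr ⟨hb₀B, i, hib₀, hki⟩, rfl⟩
      | inr e =>
        rw [hT]
        apply Finset.mem_union_right
        rw [Finset.mem_image]
        exact ⟨e, Finset.mem_range.mpr (Nat.lt_succ_of_le (fA_inr_le hfx)), rfl⟩
    · intro b hb b' hb' heq
      simp only [Finset.coe_filter, Set.mem_setOf_eq] at hb hb'
      obtain ⟨hb1, hb2⟩ := hb
      obtain ⟨hb1', hb2'⟩ := hb'
      simp only [dif_pos hb2, dif_pos hb2'] at heq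
      obtain ⟨hxb, _⟩ := hb2.choose_spec
      obtain ⟨hxb', _⟩ := hb2'.choose_spec
      obtain ⟨c, rfl⟩ := mem_hatBins_elim hb1
      obtain ⟨c', rfl⟩ := mem_hatBins_elim hb1'
      rw [Finset.mem_filter] at hxb hxb'
      rw [← hxb.2, ← hxb'.2, heq]
  have hcard2 : T.card ≤ (B.filter fun b => ∃ i ∈ b, k ∈ K i).card + (KO + 1) := by
    calc T.card ≤ ((B.filter fun b => ∃ i ∈ b, k ∈ K i).image Sum.inl).card
          + ((Finset.range (KO + 1)).image (Sum.inr : ℕ → Finset ι ⊕ ℕ)).card :=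
        Finset.card_union_le _ _
      _ ≤ (B.filter fun b => ∃ i ∈ b, k ∈ K i).card + (KO + 1) := by
        gcongr
        · exact Finset.card_image_le
        · calc ((Finset.range (KO + 1)).image (Sum.inr : ℕ → Finset ι ⊕ ℕ)).card
              ≤ (Finset.range (KO + 1)).card := Finset.card_image_le
            _ = KO + 1 := Finset.card_range _
  have hval : (B.filter fun b => ∃ i ∈ b, k ∈ K i).card ≤ valBPPS K B := by
    rw [valBPPS]
    exact Finset.le_sup (f := fun k : Fin d => (B.filter fun b => ∃ i ∈ b, k ∈ K i).card)
      (Finset.mem_univ k)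
  omega

end L8e

section L8f
variable {ι : Type*} [Fintype ι] {d : ℕ}

/-- global small load of type `t` -/
def StT (s : ι → ℝ) (K : ι → Finset (Fin d)) (ε : ℝ) (t : Finset (Fin d)) : ℝ :=
  ∑ i ∈ Finset.univ.filter (fun i : ι => s i < ε ^ 2 ∧ K i = t), s i

/-- the number of bins with small items of type `t` -/
def BtT (s : ι → ℝ) (K : ι → Finset (Fin d)) (ε : ℝ) (B : Finset (Finset ι))
    (t : Finset (Fin d)) : ℕ :=
  (B.filter fun b => 0 < Sb s K ε b t).card

lemma StT_nonneg (s : ι → ℝ) (K : ι → Finset (Fin d)) (ε : ℝ) (hpos : ∀ i, 0 < s i)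
    (t : Finset (Fin d)) : 0 ≤ StT s K ε t :=
  Finset.sum_nonneg fun i _ => (hpos i).le

lemma StT_eq_sum_Sb (s : ι → ℝ) (K : ι → Finset (Fin d)) (ε : ℝ) {B : Finset (Finset ι)}
    (hB : IsSolution s K 1 B) (t : Finset (Fin d)) :
    StT s K ε t = ∑ b ∈ B, Sb s K ε b t := by
  unfold StT Sb
  exact sum_partition' B hB.1 hB.2.1 _ _

/-- total load of scenario `k` is at most the number of bins with a `k`-item -/
lemma scen_load_le (s : ι → ℝ) (K : ι → Finset (Fin d)) {B : Finset (Finset ι)}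
    (hB : IsSolution s K 1 B) (hpos : ∀ i, 0 < s i) (k : Fin d) :
    ∑ i ∈ univ.filter (fun i => k ∈ K i), s i ≤ (valBPPS K B : ℝ) := by
  rw [sum_partition' B hB.1 hB.2.1 (fun i => k ∈ K i) s]
  rw [← Finset.sum_filter_add_sum_filter_not B (fun b => ∃ i ∈ b, k ∈ K i)]
  have hz : ∑ b ∈ B.filter (fun b => ¬ ∃ i ∈ b, k ∈ K i),
      ∑ i ∈ b.filter (fun i => k ∈ K i), s i = 0 := by
    apply Finset.sum_eq_zero
    intro b hb
    rw [Finset.mem_filter] at hb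
    have : b.filter (fun i => k ∈ K i) = ∅ := by
      rw [Finset.filter_eq_empty_iff]
      intro i hi hki
      exact hb.2 ⟨i, hi, hki⟩
    rw [this, Finset.sum_empty]
  rw [hz, add_zero]
  have h1 : ∑ b ∈ B.filter (fun b => ∃ i ∈ b, k ∈ K i),
      ∑ i ∈ b.filter (fun i => k ∈ K i), s i
      ≤ ∑ _b ∈ B.filter (fun b => ∃ i ∈ b, k ∈ K i), (1 : ℝ) := by
    apply Finset.sum_le_sum
    intro b hb
    rw [Finset.mem_filter] at hb
    exact hB.2.2.2 b hb.1 k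
  rw [Finset.sum_const, nsmul_eq_mul, mul_one] at h1
  have h2 : (B.filter (fun b => ∃ i ∈ b, k ∈ K i)).card ≤ valBPPS K B := by
    rw [valBPPS]
    exact Finset.le_sup (f := fun k : Fin d => (B.filter fun b => ∃ i ∈ b, k ∈ K i).card)
      (Finset.mem_univ k)
  calc ∑ b ∈ B.filter (fun b => ∃ i ∈ b, k ∈ K i), ∑ i ∈ b.filter (fun i => k ∈ K i), s i
      ≤ ((B.filter (fun b => ∃ i ∈ b, k ∈ K i)).card : ℝ) := h1
    _ ≤ (valBPPS K B : ℝ) := by exact_mod_cast h2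

/-- total small load of the types containing `k` is at most `v` -/
lemma sum_St_k_le (s : ι → ℝ) (K : ι → Finset (Fin d)) (ε : ℝ) {B : Finset (Finset ι)}
    (hB : IsSolution s K 1 B) (hpos : ∀ i, 0 < s i) (k : Fin d) :
    ∑ t ∈ univ.filter (fun t : Finset (Fin d) => k ∈ t), StT s K ε t ≤ (valBPPS K B : ℝ) := by
  have h1 : ∑ t ∈ univ.filter (fun t : Finset (Fin d) => k ∈ t), StT s K ε t
      = ∑ i ∈ (univ.filter (fun i => s i < ε ^ 2)).filter
          (fun i => K i ∈ univ.filter (fun t : Finset (Fin d) => k ∈ t)), s i := by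
    rw [← Finset.sum_fiberwise_eq_sum_filter]
    apply Finset.sum_congr rfl
    intro t _
    rw [StT, Finset.filter_filter]
  rw [h1]
  calc ∑ i ∈ (univ.filter (fun i => s i < ε ^ 2)).filter
          (fun i => K i ∈ univ.filter (fun t : Finset (Fin d) => k ∈ t)), s i
      ≤ ∑ i ∈ univ.filter (fun i => k ∈ K i), s i := by
        apply Finset.sum_le_sum_of_subset_of_nonneg
        · intro i hi
          simp only [Finset.mem_filter, Finset.mem_univ, true_and] at hi ⊢
          exact hi.2
        · intro i _ _
          exact (hpos i).le
    _ ≤ (valBPPS K B : ℝ) := scen_load_le s K hB hpos k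

end L8f

section L8g
variable {ι : Type*} [Fintype ι] {d : ℕ}

/-- number of overflow items of type `t` -/
def ctT (s : ι → ℝ) (K : ι → Finset (Fin d)) (ε : ℝ) (B : Finset (Finset ι))
    (t : Finset (Fin d)) : ℕ :=
  (univ.filter fun j : Fin (replCount s K ε t) => t ≠ ∅ ∧ Qt s K ε B t ≤ (j : ℕ)).card

lemma card_OvP_eq (s : ι → ℝ) (K : ι → Finset (Fin d)) (ε : ℝ) (B : Finset (Finset ι)) :
    Fintype.card (Subtype (OvP s K ε B)) = ∑ t : Finset (Fin d), ctT s K ε B t := by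
  rw [Fintype.card_subtype, Finset.card_filter, ← Finset.univ_sigma_univ, Finset.sum_sigma]
  apply Finset.sum_congr rfl
  intro t _
  rw [ctT, Finset.card_filter]
  apply Finset.sum_congr rfl
  intro j _
  exact if_congr Iff.rfl rfl rfl

/-- the per-type overflow bound -/
lemma ctT_le (s : ι → ℝ) (K : ι → Finset (Fin d)) {ε : ℝ} (hε0 : 0 < ε) (hε : ε ≤ 1 / 2)
    (hpos : ∀ i, 0 < s i) {B : Finset (Finset ι)} (hB : IsSolution s K 1 B)
    (t : Finset (Fin d)) :
    (ctT s K ε B t : ℝ) ≤ 2 * StT s K ε t + 2 * (BtT s K ε B t : ℝ) := by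
  have hSt0 : 0 ≤ StT s K ε t := StT_nonneg s K ε hpos t
  by_cases hc : ctT s K ε B t = 0
  · rw [hc]
    push_cast
    positivity
  · -- there is an overflow item, so Qt < replCount
    have hne : (univ.filter fun j : Fin (replCount s K ε t) =>
        t ≠ ∅ ∧ Qt s K ε B t ≤ (j : ℕ)).Nonempty := by
      rw [← Finset.card_pos]
      exact Nat.pos_of_ne_zero hc
    obtain ⟨j, hj⟩ := hne
    rw [Finset.mem_filter] at hj
    have hQR : Qt s K ε B t < replCount s K ε t := lt_of_le_of_lt hj.2.2 j.isLt
    -- ctT ≤ replCount - Qt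
    have hct : ctT s K ε B t ≤ replCount s K ε t - Qt s K ε B t := by
      rw [ctT]
      have := Finset.card_le_card_of_injOn
        (f := fun j : Fin (replCount s K ε t) => (j : ℕ) - Qt s K ε B t)
        (s := univ.filter fun j : Fin (replCount s K ε t) =>
          t ≠ ∅ ∧ Qt s K ε B t ≤ (j : ℕ))
        (t := Finset.range (replCount s K ε t - Qt s K ε B t)) ?_ ?_
      · simpa using this
      · intro j hj2
        simp only [Finset.mem_coe] at hj2 ⊢
        rw [Finset.mem_filter] at hj2
        rw [Finset.mem_range]
        show (j : ℕ) - Qt s K ε B t < replCount s K ε t - Qt s K ε B t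
        have := j.isLt
        omega
      · intro j1 hj1 j2 hj2 heq
        simp only [Finset.coe_filter, Set.mem_setOf_eq, Finset.mem_univ, true_and] at hj1 hj2
        have heq' : (j1 : ℕ) - Qt s K ε B t = (j2 : ℕ) - Qt s K ε B t := heq
        have : (j1 : ℕ) = (j2 : ℕ) := by omega
        exact Fin.ext this
    -- ceiling bound
    have hεe : 0 < ε - ε ^ 2 := by nlinarith
    have hceil : (replCount s K ε t : ℝ) ≤ StT s K ε t / (ε - ε ^ 2) + 1 :=
      (Nat.ceil_lt_add_one (div_nonneg hSt0 hεe.le)).le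
    -- floor bound:  StT/ε - BtT ≤ Qt
    have hQ : StT s K ε t / ε - (BtT s K ε B t : ℝ) ≤ (Qt s K ε B t : ℝ) := by
      have hsum : (Qt s K ε B t : ℝ) = ∑ b ∈ B, (nbq s K ε b t : ℝ) := by
        rw [Qt]
        push_cast
        rfl
      have hper : ∀ b ∈ B, Sb s K ε b t / ε - (if 0 < Sb s K ε b t then (1 : ℝ) else 0)
          ≤ (nbq s K ε b t : ℝ) := by
        intro b _
        by_cases hSb : 0 < Sb s K ε b t
        · rw [if_pos hSb]
          have := Nat.lt_floor_add_one (Sb s K ε b t / ε)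
          rw [nbq]
          push_cast
          linarith
        · rw [if_neg hSb]
          have hSb0 : Sb s K ε b t = 0 :=
            le_antisymm (not_lt.mp hSb) (Sb_nonneg s K ε hpos b t)
          rw [nbq, hSb0]
          norm_num
      have hsum2 : ∑ b ∈ B, (Sb s K ε b t / ε - (if 0 < Sb s K ε b t then (1 : ℝ) else 0))
          ≤ ∑ b ∈ B, (nbq s K ε b t : ℝ) := Finset.sum_le_sum hper
      rw [Finset.sum_sub_distrib] at hsum2
      have h3 : ∑ b ∈ B, Sb s K ε b t / ε = StT s K ε t / ε := by
        rw [← Finset.sum_div, ← StT_eq_sum_Sb s K ε hB t]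
      have h4 : ∑ b ∈ B, (if 0 < Sb s K ε b t then (1 : ℝ) else 0) = (BtT s K ε B t : ℝ) := by
        rw [BtT, Finset.sum_boole]
      rw [h3, h4] at hsum2
      linarith [hsum]
    -- 1 ≤ BtT
    have hBt1 : (1 : ℝ) ≤ (BtT s K ε B t : ℝ) := by
      have hrc : 0 < replCount s K ε t := by omega
      have hStpos : 0 < StT s K ε t := by
        have h5 : 0 < StT s K ε t / (ε - ε ^ 2) := Nat.ceil_pos.mp hrc
        by_contra hcon
        push_neg at hcon
        have : StT s K ε t / (ε - ε ^ 2) ≤ 0 := div_nonpos_of_nonpos_of_nonneg hcon hεe.le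
        linarith
      have hex : ∃ b ∈ B, 0 < Sb s K ε b t := by
        have hlt : ∑ b ∈ B, (0 : ℝ) < ∑ b ∈ B, Sb s K ε b t := by
          rw [Finset.sum_const_zero, ← StT_eq_sum_Sb s K ε hB t]
          exact hStpos
        obtain ⟨b, hbB, hb⟩ := Finset.exists_lt_of_sum_lt hlt
        exact ⟨b, hbB, hb⟩
      obtain ⟨b, hbB, hb⟩ := hex
      have : 0 < BtT s K ε B t := by
        rw [BtT, Finset.card_pos]
        exact ⟨b, Finset.mem_filter.mpr ⟨hbB, hb⟩⟩
      exact_mod_cast this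
    -- division comparison
    have hdiv : StT s K ε t / (ε - ε ^ 2) ≤ StT s K ε t / ε + 2 * StT s K ε t := by
      have h1ε : (0 : ℝ) < 1 - ε := by linarith
      have heq2 : StT s K ε t / (ε - ε ^ 2) - StT s K ε t / ε = StT s K ε t / (1 - ε) * ε / ε := by
        field_simp
        ring
      have heq3 : StT s K ε t / (1 - ε) * ε / ε = StT s K ε t / (1 - ε) := by
        field_simp
      have h2 : StT s K ε t / (1 - ε) ≤ 2 * StT s K ε t := by
        rw [div_le_iff₀ h1ε]
        nlinarith
      linarith [heq2, heq3, h2]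
    -- combine
    have hcast : (ctT s K ε B t : ℝ) ≤ (replCount s K ε t : ℝ) - (Qt s K ε B t : ℝ) := by
      have h6 : (ctT s K ε B t : ℝ) ≤ ((replCount s K ε t - Qt s K ε B t : ℕ) : ℝ) := by
        exact_mod_cast hct
      rw [Nat.cast_sub hQR.le] at h6
      exact h6
    linarith

end L8g

section L8h
variable {ι : Type*} [Fintype ι] {d : ℕ}

lemma card_OvP_bound (s : ι → ℝ) (K : ι → Finset (Fin d)) {ε : ℝ} (hε0 : 0 < ε)
    (hε : ε ≤ 1 / 2) (hpos : ∀ i, 0 < s i) {B : Finset (Finset ι)}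
    (hB : IsSolution s K 1 B) :
    (Fintype.card (Subtype (OvP s K ε B)) : ℝ)
      ≤ 2 ^ (d + 1) * ((d : ℝ) + 1) * (valBPPS K B : ℝ) := by
  have hv : (0 : ℝ) ≤ (valBPPS K B : ℝ) := Nat.cast_nonneg _
  have hct0 : ctT s K ε B ∅ = 0 := by
    rw [ctT]
    simp
  rw [card_OvP_eq, Nat.cast_sum]
  have hstepA : ∑ t : Finset (Fin d), (ctT s K ε B t : ℝ)
      = ∑ t ∈ univ.filter (fun t : Finset (Fin d) => t ≠ ∅), (ctT s K ε B t : ℝ) := by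
    symm
    apply Finset.sum_filter_of_ne
    intro t _ hne
    intro hemp
    rw [hemp, hct0] at hne
    exact hne (by norm_num)
  rw [hstepA]
  have hstepB : ∑ t ∈ univ.filter (fun t : Finset (Fin d) => t ≠ ∅), (ctT s K ε B t : ℝ)
      ≤ ∑ t ∈ univ.filter (fun t : Finset (Fin d) => t ≠ ∅),
          (2 * StT s K ε t + 2 * (BtT s K ε B t : ℝ)) :=
    Finset.sum_le_sum fun t _ => ctT_le s K hε0 hε hpos hB t
  have hstepD : ∑ t ∈ univ.filter (fun t : Finset (Fin d) => t ≠ ∅), StT s K ε t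
      ≤ (d : ℝ) * (valBPPS K B : ℝ) := by
    have h1 : ∀ t ∈ univ.filter (fun t : Finset (Fin d) => t ≠ ∅),
        StT s K ε t ≤ ∑ _k ∈ t, StT s K ε t := by
      intro t ht
      rw [Finset.sum_const, nsmul_eq_mul]
      rw [Finset.mem_filter] at ht
      have hcard : 1 ≤ (t.card : ℝ) := by
        exact_mod_cast Finset.card_pos.mpr (Finset.nonempty_iff_ne_empty.mpr ht.2)
      nlinarith [StT_nonneg s K ε hpos t]
    calc ∑ t ∈ univ.filter (fun t : Finset (Fin d) => t ≠ ∅), StT s K ε t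
        ≤ ∑ t ∈ univ.filter (fun t : Finset (Fin d) => t ≠ ∅), ∑ _k ∈ t, StT s K ε t :=
          Finset.sum_le_sum h1
      _ = ∑ k : Fin d, ∑ t ∈ univ.filter (fun t : Finset (Fin d) => t ≠ ∅ ∧ k ∈ t),
            StT s K ε t := by
          apply Finset.sum_comm'
          intro t k
          simp only [Finset.mem_filter, Finset.mem_univ, true_and]
          tauto
      _ ≤ ∑ _k : Fin d, (valBPPS K B : ℝ) := by
          apply Finset.sum_le_sum
          intro k _
          calc ∑ t ∈ univ.filter (fun t : Finset (Fin d) => t ≠ ∅ ∧ k ∈ t), StT s K ε t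
              ≤ ∑ t ∈ univ.filter (fun t : Finset (Fin d) => k ∈ t), StT s K ε t := by
                apply Finset.sum_le_sum_of_subset_of_nonneg
                · intro t ht
                  simp only [Finset.mem_filter, Finset.mem_univ, true_and] at ht ⊢
                  exact ht.2
                · intro t _ _
                  exact StT_nonneg s K ε hpos t
            _ ≤ (valBPPS K B : ℝ) := sum_St_k_le s K ε hB hpos k
      _ = (d : ℝ) * (valBPPS K B : ℝ) := by
          rw [Finset.sum_const, Finset.card_univ, Fintype.card_fin, nsmul_eq_mul]
  have hstepE : ∑ t ∈ univ.filter (fun t : Finset (Fin d) => t ≠ ∅), (BtT s K ε B t : ℝ)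
      ≤ (2 : ℝ) ^ d * (valBPPS K B : ℝ) := by
    have h1 : ∀ t ∈ univ.filter (fun t : Finset (Fin d) => t ≠ ∅),
        (BtT s K ε B t : ℝ) ≤ (valBPPS K B : ℝ) := by
      intro t ht
      rw [Finset.mem_filter] at ht
      obtain ⟨k, hk⟩ := Finset.nonempty_iff_ne_empty.mpr ht.2
      have h2 : BtT s K ε B t ≤ (B.filter fun b => ∃ i ∈ b, k ∈ K i).card := by
        rw [BtT]
        apply Finset.card_le_card
        intro b hb
        rw [Finset.mem_filter] at hb ⊢
        obtain ⟨i, hib, _, hKi⟩ := exists_of_Sb_pos hb.2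
        exact ⟨hb.1, i, hib, hKi ▸ hk⟩
      have h3 : (B.filter fun b => ∃ i ∈ b, k ∈ K i).card ≤ valBPPS K B := by
        rw [valBPPS]
        exact Finset.le_sup (f := fun k : Fin d => (B.filter fun b => ∃ i ∈ b, k ∈ K i).card)
          (Finset.mem_univ k)
      exact_mod_cast h2.trans h3
    calc ∑ t ∈ univ.filter (fun t : Finset (Fin d) => t ≠ ∅), (BtT s K ε B t : ℝ)
        ≤ ((univ.filter (fun t : Finset (Fin d) => t ≠ ∅)).card : ℕ) • (valBPPS K B : ℝ) :=
          Finset.sum_le_card_nsmul _ _ _ h1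
      _ = ((univ.filter (fun t : Finset (Fin d) => t ≠ ∅)).card : ℝ) * (valBPPS K B : ℝ) := by
          rw [nsmul_eq_mul]
      _ ≤ (2 : ℝ) ^ d * (valBPPS K B : ℝ) := by
          apply mul_le_mul_of_nonneg_right _ hv
          have h4 : (univ.filter (fun t : Finset (Fin d) => t ≠ ∅)).card
              ≤ (univ : Finset (Finset (Fin d))).card := Finset.card_filter_le _ _
          have h5 : (univ : Finset (Finset (Fin d))).card = 2 ^ d := by
            rw [Finset.card_univ, Fintype.card_finset, Fintype.card_fin]
          have h6 : (univ.filter (fun t : Finset (Fin d) => t ≠ ∅)).card ≤ 2 ^ d := h5 ▸ h4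
          calc ((univ.filter (fun t : Finset (Fin d) => t ≠ ∅)).card : ℝ)
              ≤ ((2 ^ d : ℕ) : ℝ) := by exact_mod_cast h6
            _ = (2 : ℝ) ^ d := by push_cast; ring
  have hexp : ∑ t ∈ univ.filter (fun t : Finset (Fin d) => t ≠ ∅),
      (2 * StT s K ε t + 2 * (BtT s K ε B t : ℝ))
      = 2 * (∑ t ∈ univ.filter (fun t : Finset (Fin d) => t ≠ ∅), StT s K ε t)
        + 2 * (∑ t ∈ univ.filter (fun t : Finset (Fin d) => t ≠ ∅), (BtT s K ε B t : ℝ)) := by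
    rw [Finset.sum_add_distrib, Finset.mul_sum, Finset.mul_sum]
  have hp1 : (1 : ℝ) ≤ 2 ^ d := one_le_pow₀ one_le_two
  have hd0 : (0 : ℝ) ≤ (d : ℝ) := Nat.cast_nonneg d
  have hkey : 0 ≤ ((2 : ℝ) ^ d - 1) * ((d : ℝ) * (valBPPS K B : ℝ)) :=
    mul_nonneg (by linarith) (mul_nonneg hd0 hv)
  have hpow : (2 : ℝ) ^ (d + 1) = 2 ^ d * 2 := pow_succ 2 d
  calc ∑ t ∈ univ.filter (fun t : Finset (Fin d) => t ≠ ∅), (ctT s K ε B t : ℝ)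
      ≤ ∑ t ∈ univ.filter (fun t : Finset (Fin d) => t ≠ ∅),
          (2 * StT s K ε t + 2 * (BtT s K ε B t : ℝ)) := hstepB
    _ = 2 * (∑ t ∈ univ.filter (fun t : Finset (Fin d) => t ≠ ∅), StT s K ε t)
        + 2 * (∑ t ∈ univ.filter (fun t : Finset (Fin d) => t ≠ ∅), (BtT s K ε B t : ℝ)) :=
        hexp
    _ ≤ 2 * ((d : ℝ) * (valBPPS K B : ℝ)) + 2 * ((2 : ℝ) ^ d * (valBPPS K B : ℝ)) := by
        linarith
    _ ≤ 2 ^ (d + 1) * ((d : ℝ) + 1) * (valBPPS K B : ℝ) := by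
        rw [hpow]
        nlinarith [hkey]

end L8h

section L8i
variable {ι : Type*} [Fintype ι] {d : ℕ}

/-- singleton bins always form a solution -/
lemma singleton_solution {α : Type*} [Fintype α] (s : α → ℝ) (hfit : ∀ i, s i ≤ 1)
    (K : α → Finset (Fin d)) :
    IsSolution s K 1 ((univ : Finset α).image fun i => ({i} : Finset α)) := by
  refine ⟨?_, ?_, ?_, ?_⟩
  · intro i
    exact ⟨{i}, Finset.mem_image_of_mem _ (Finset.mem_univ i), Finset.mem_singleton_self i⟩
  · intro b hb b' hb' hne
    rw [Finset.mem_image] at hb hb'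
    obtain ⟨i, _, rfl⟩ := hb
    obtain ⟨j, _, rfl⟩ := hb'
    rw [Finset.disjoint_left]
    intro x hx hx'
    rw [Finset.mem_singleton] at hx hx'
    exact hne (by rw [← hx, ← hx'])
  · intro h
    rw [Finset.mem_image] at h
    obtain ⟨i, _, hi⟩ := h
    exact (Finset.singleton_ne_empty i) hi
  · intro b hb k
    rw [Finset.mem_image] at hb
    obtain ⟨i, _, rfl⟩ := hb
    rw [scenarioItems, Finset.filter_singleton]
    by_cases hk : k ∈ K i
    · rw [if_pos hk, Finset.sum_singleton]
      exact hfit i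
    · rw [if_neg hk, Finset.sum_empty]
      norm_num

end L8i


/-- Lemma 8: replacing the small items (size `< ε²`) of each type `t` by
`⌈(∑_{i ∈ S_t} s_i)/(ε - ε²)⌉` items of size `ε` of type `t` gives an instance
`Î` with `opt(Î) ≤ (1 + 2^{d+1}(d+1)ε)·opt(I) + 1`. -/
theorem stmt_12 {ι : Type*} [Fintype ι] (d : ℕ) (s : ι → ℝ)
    (hpos : ∀ i, 0 < s i) (hfit : ∀ i, s i ≤ 1) (K : ι → Finset (Fin d))
    (ε : ℝ) (hε0 : 0 < ε) (hε : ε ≤ 1 / 2) (hint : ∃ n : ℕ, ε = 1 / n) :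
    (optBPPS (hatSize s K ε) (hatScen s K ε) 1 : ℝ)
      ≤ (1 + 2 ^ (d + 1) * (d + 1) * ε) * optBPPS s K 1 + 1 := by
  obtain ⟨n, hn⟩ := hint
  have hn0 : n ≠ 0 := by
    rintro rfl
    rw [hn] at hε0
    norm_num at hε0
  have hM0 : 0 < n := Nat.pos_of_ne_zero hn0
  have hnR : (0 : ℝ) < (n : ℝ) := by exact_mod_cast hM0
  have hMε : (n : ℝ) * ε = 1 := by
    rw [hn]
    field_simp
  -- an optimal solution of I
  have hSne : {v : ℕ | ∃ bins : Finset (Finset ι),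
      IsSolution s K 1 bins ∧ valBPPS K bins = v}.Nonempty :=
    ⟨valBPPS K ((univ : Finset ι).image fun i => ({i} : Finset ι)),
      (univ : Finset ι).image fun i => ({i} : Finset ι), singleton_solution s hfit K, rfl⟩
  have hmem : optBPPS s K 1 ∈ {v : ℕ | ∃ bins : Finset (Finset ι),
      IsSolution s K 1 bins ∧ valBPPS K bins = v} := Nat.sInf_mem hSne
  obtain ⟨B, hB, hval⟩ := hmem
  -- the choice of bins
  have hg : ∀ i, (hB.1 i).choose ∈ B ∧ i ∈ (hB.1 i).choose := by
    intro i
    obtain ⟨h1, h2⟩ := (hB.1 i).choose_spec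
    exact ⟨h1, h2⟩
  set g : ι → Finset ι := fun i => (hB.1 i).choose with hg_def
  have hsol := hat_solution hε0 hpos hB hg hMε hM0
  have hval2 := hat_val hε0 hB hg n
  have hopt : optBPPS (hatSize s K ε) (hatScen s K ε) 1
      ≤ valBPPS (hatScen s K ε) (hatBins s K ε B g n) :=
    Nat.sInf_le ⟨hatBins s K ε B g n, hsol, rfl⟩
  have hcount := card_OvP_bound s K hε0 hε hpos hB
  set C := Fintype.card (Subtype (OvP s K ε B)) with hC
  set v := valBPPS K B with hv
  have h1 : (optBPPS (hatSize s K ε) (hatScen s K ε) 1 : ℝ)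
      ≤ (v : ℝ) + (((C - 1) / n : ℕ) : ℝ) + 1 := by
    have h0 := hopt.trans hval2
    have : (optBPPS (hatSize s K ε) (hatScen s K ε) 1 : ℝ)
        ≤ ((v + ((C - 1) / n + 1) : ℕ) : ℝ) := by exact_mod_cast h0
    push_cast at this
    linarith
  have h2 : (((C - 1) / n : ℕ) : ℝ) ≤ (C : ℝ) * ε := by
    calc (((C - 1) / n : ℕ) : ℝ) ≤ ((C - 1 : ℕ) : ℝ) / (n : ℝ) := Nat.cast_div_le
      _ ≤ (C : ℝ) / (n : ℝ) := by
          gcongr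
          exact_mod_cast Nat.sub_le C 1
      _ = (C : ℝ) * ε := by
          rw [div_eq_mul_one_div, ← hn]
  have h3 : (C : ℝ) * ε ≤ 2 ^ (d + 1) * ((d : ℝ) + 1) * (v : ℝ) * ε := by
    exact mul_le_mul_of_nonneg_right hcount hε0.le
  have hvopt : (v : ℝ) = (optBPPS s K 1 : ℝ) := by exact_mod_cast congrArg Nat.cast hval
  calc (optBPPS (hatSize s K ε) (hatScen s K ε) 1 : ℝ)
      ≤ (v : ℝ) + (((C - 1) / n : ℕ) : ℝ) + 1 := h1
    _ ≤ (v : ℝ) + 2 ^ (d + 1) * ((d : ℝ) + 1) * (v : ℝ) * ε + 1 := by linarith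
    _ = (1 + 2 ^ (d + 1) * ((d : ℝ) + 1) * ε) * (v : ℝ) + 1 := by ring
    _ = (1 + 2 ^ (d + 1) * ((d : ℝ) + 1) * ε) * (optBPPS s K 1 : ℝ) + 1 := by rw [hvopt]
end
end

section
/- For any λ with 0 ≤ λ ≤ W/2, the function f: [0,W] → [0,W] defined by f(s) = W if s > W − λ, f(s) = 0 if s ≤ λ, and f(s) = s otherwise, is a dual feasible function: for any finite multiset X of reals in [0,W] with ∑_{x∈X} x ≤ W, one has ∑_{x∈X} f(x) ≤ W. -/
/-- The Fekete–Schepers function is a dual feasible function: for `0 ≤ λ ≤ W/2`,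
the function sending `s` to `W` if `s > W - lam`, to `0` if `s ≤ λ`, and to `s`
otherwise, satisfies: for every finite multiset `X` of reals in `[0, W]` with
`∑_{x ∈ X} x ≤ W`, also `∑_{x ∈ X} f x ≤ W`. -/
theorem stmt_14 (W lam : ℝ) (hlam0 : 0 ≤ lam) (hlam : lam ≤ W / 2)
    (f : ℝ → ℝ) (hf : ∀ s, f s = if s > W - lam then W else if s ≤ lam then 0 else s)
    (X : Multiset ℝ) (hX : ∀ x ∈ X, 0 ≤ x ∧ x ≤ W) (hsum : X.sum ≤ W) :
    (X.map f).sum ≤ W := by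
  by_cases h : ∃ x ∈ X, x > W - lam
  · obtain ⟨x₀, hx₀, hgt⟩ := h
    obtain ⟨X', rfl⟩ := Multiset.exists_cons_of_mem hx₀
    rw [Multiset.map_cons, Multiset.sum_cons]
    have hX'sum : X'.sum ≤ W - x₀ := by
      rw [Multiset.sum_cons] at hsum; linarith
    have hzero : ∀ y ∈ X'.map f, y = 0 := by
      intro y hy
      obtain ⟨x, hx, rfl⟩ := Multiset.mem_map.mp hy
      have hx0 : 0 ≤ x := (hX x (Multiset.mem_cons_of_mem hx)).1
      have hle : x ≤ X'.sum :=
        Multiset.single_le_sum (fun z hz => (hX z (Multiset.mem_cons_of_mem hz)).1) x hx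
      have hxlam : x ≤ lam := by linarith
      rw [hf, if_neg (by push_neg; linarith), if_pos hxlam]
    rw [Multiset.sum_eq_zero hzero, hf, if_pos hgt]
    linarith
  · push_neg at h
    have hle : (X.map f).sum ≤ (X.map id).sum := by
      apply Multiset.sum_map_le_sum_map
      intro x hx
      have hx0 : 0 ≤ x := (hX x hx).1
      have := h x hx
      rw [hf, if_neg (by push_neg; linarith)]
      split_ifs with h2
      · simpa using hx0
      · simp
    simpa using hle.trans (by simpa using hsum)
end
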